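/- Let f : ℕ → ℂ with f(n) = ∑_{dδ = n} g(d) τ_k(δ), where k ≥ 1 and the series ∑ g(n)/n converges absolutely. Then (1/(x (log x)^{k-1})) ∑_{n ≤ x} f(n) tends to (1/(k-1)!) ∑_{n=1}^∞ g(n)/n as x → ∞. -/

import Mathlib

open Finset Filter

noncomputable section

open Real Set

/-- The set of ordered `k`-tuples of positive integers with product `n`. -/
def tuplesProd (k n : ℕ) : Finset (Fin k → ℕ) :=
  (Fintype.piFinset fun _ => n.divisors).filter fun v => ∏ i, v i = n

/-- The Piltz divisor function `τ_k`. -/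
def piltz (k n : ℕ) : ℕ := (tuplesProd k n).card

lemma piltz_zero (n : ℕ) : piltz 0 n = if n = 1 then 1 else 0 := by
  classical
  unfold piltz tuplesProd
  rcases eq_or_ne n 1 with rfl | h
  · simp
  · simp [Finset.filter_eq_empty_iff, eq_comm, h]

lemma piltz_succ (k n : ℕ) :
    piltz (k+1) n = ∑ p ∈ n.divisorsAntidiagonal, piltz k p.2 := by
  classical
  rcases eq_or_ne n 0 with rfl | hn
  · simp [piltz, tuplesProd]
  unfold piltz
  rw [← Finset.card_sigma]
  apply Finset.card_nbij'
    (i := fun (v : Fin (k+1) → ℕ) =>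
      (⟨(v 0, ∏ i : Fin k, v i.succ), fun i => v i.succ⟩ :
        Σ _p : ℕ × ℕ, (Fin k → ℕ)))
    (j := fun p => Fin.cons p.1.1 p.2)
  · intro v hv
    simp only [Finset.mem_coe, tuplesProd, Finset.mem_filter, Fintype.mem_piFinset] at hv
    obtain ⟨hmem, hprod⟩ := hv
    have h0 : v 0 * ∏ i : Fin k, v i.succ = n := by
      rw [← hprod, Fin.prod_univ_succ]
    simp only [Finset.mem_coe, Finset.mem_sigma, Nat.mem_divisorsAntidiagonal, tuplesProd,
      Finset.mem_filter, Fintype.mem_piFinset]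
    refine ⟨⟨h0, hn⟩, fun i => ?_, trivial⟩
    rw [Nat.mem_divisors]
    have hP : (∏ i : Fin k, v i.succ) ≠ 0 := by
      intro h; apply hn; rw [← h0, h, mul_zero]
    exact ⟨Finset.dvd_prod_of_mem _ (Finset.mem_univ i), hP⟩
  · intro p hp
    simp only [Finset.mem_coe, Finset.mem_sigma, Nat.mem_divisorsAntidiagonal, tuplesProd,
      Finset.mem_filter, Fintype.mem_piFinset, Nat.mem_divisors] at hp
    obtain ⟨⟨hde, _⟩, hmem, hprod⟩ := hp
    simp only [Finset.mem_coe, tuplesProd, Finset.mem_filter, Fintype.mem_piFinset, Nat.mem_divisors]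
    constructor
    · intro i
      refine Fin.cases ?_ ?_ i
      · rw [Fin.cons_zero]
        exact ⟨⟨p.1.2, hde.symm⟩, hn⟩
      · intro j
        rw [Fin.cons_succ]
        exact ⟨((hmem j).1).trans ⟨p.1.1, by rw [← hde]; ring⟩, hn⟩
    · rw [Fin.prod_univ_succ]
      simp only [Fin.cons_zero, Fin.cons_succ]
      rw [hprod, hde]
  · intro v hv
    funext i
    refine Fin.cases ?_ ?_ i
    · simp
    · intro j; simp
  · intro p hp
    simp only [Finset.mem_coe, Finset.mem_sigma, Nat.mem_divisorsAntidiagonal, tuplesProd,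
      Finset.mem_filter] at hp
    obtain ⟨⟨hde, _⟩, _, hprod⟩ := hp
    refine Sigma.ext ?_ ?_
    · simp only [Fin.cons_zero, Fin.cons_succ]
      rw [hprod]
    · simp [Fin.cons_succ]


lemma swap_sum {M : Type*} [AddCommMonoid M] (N : ℕ) (F : ℕ → ℕ → M) :
    ∑ n ∈ Finset.Icc 1 N, ∑ p ∈ n.divisorsAntidiagonal, F p.1 p.2
      = ∑ d ∈ Finset.Icc 1 N, ∑ e ∈ Finset.Icc 1 (N / d), F d e := by
  classical
  rw [Finset.sum_sigma', Finset.sum_sigma']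
  apply Finset.sum_nbij' (i := fun x => (⟨x.2.1, x.2.2⟩ : Σ _d : ℕ, ℕ))
    (j := fun y => ⟨y.1 * y.2, (y.1, y.2)⟩)
  · rintro ⟨n, d, e⟩ h
    simp only [Finset.mem_sigma, Finset.mem_Icc, Nat.mem_divisorsAntidiagonal] at h ⊢
    obtain ⟨⟨h1, h2⟩, hde, hn0⟩ := h
    subst hde
    have hd : 1 ≤ d := Nat.pos_of_ne_zero (by rintro rfl; simp at hn0)
    have he : 1 ≤ e := by
      rcases Nat.eq_zero_or_pos e with rfl | h; · simp at hn0
      · exact h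
    refine ⟨⟨hd, le_trans (Nat.le_mul_of_pos_right d he) h2⟩, he, ?_⟩
    exact (Nat.le_div_iff_mul_le (by omega)).2 (by rw [mul_comm]; exact h2)
  · rintro ⟨d, e⟩ h
    simp only [Finset.mem_sigma, Finset.mem_Icc, Nat.mem_divisorsAntidiagonal] at h ⊢
    obtain ⟨⟨hd1, hdN⟩, he1, heN⟩ := h
    have := (Nat.le_div_iff_mul_le (by omega)).1 heN
    refine ⟨⟨Nat.mul_pos hd1 he1, by rw [mul_comm] at this; exact this⟩, trivial, ?_⟩
    exact Nat.mul_ne_zero (by omega) (by omega)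
  · rintro ⟨n, d, e⟩ h
    simp only [Finset.mem_sigma, Nat.mem_divisorsAntidiagonal] at h
    obtain ⟨_, hde, _⟩ := h
    simp [hde]
  · rintro ⟨d, e⟩ h
    rfl
  · rintro ⟨n, d, e⟩ h
    rfl

lemma piltz_one (n : ℕ) (hn : n ≠ 0) : piltz 1 n = 1 := by
  rw [piltz_succ, Finset.sum_eq_single (n, 1)]
  · simp [piltz_zero]
  · rintro ⟨d, e⟩ hmem hne
    simp only [Nat.mem_divisorsAntidiagonal] at hmem
    rw [piltz_zero]
    simp only [ite_eq_right_iff]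
    intro he; exact absurd (by subst he; rw [mul_one] at hmem; simp [hmem.1]) hne
  · intro h
    exact absurd (by simp [Nat.mem_divisorsAntidiagonal, hn]) h

noncomputable def Tk (k : ℕ) (x : ℝ) : ℝ := ∑ n ∈ Finset.Icc 1 ⌊x⌋₊, (piltz k n : ℝ)

lemma Tk_nonneg (k : ℕ) (x : ℝ) : 0 ≤ Tk k x :=
  Finset.sum_nonneg fun _ _ => Nat.cast_nonneg _

lemma Tk_one (x : ℝ) : Tk 1 x = (⌊x⌋₊ : ℝ) := by
  have h : ∀ n ∈ Finset.Icc 1 ⌊x⌋₊, (piltz 1 n : ℝ) = 1 := fun n hn => by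
    rw [piltz_one n (by simp only [Finset.mem_Icc] at hn; omega)]; norm_num
  rw [Tk, Finset.sum_congr rfl h, Finset.sum_const, Nat.card_Icc, nsmul_eq_mul, mul_one]
  norm_num

lemma Tk_succ (k : ℕ) (x : ℝ) (hx : 0 ≤ x) :
    Tk (k+1) x = ∑ d ∈ Finset.Icc 1 ⌊x⌋₊, Tk k (x / d) := by
  unfold Tk
  have : ∀ n ∈ Finset.Icc 1 ⌊x⌋₊, (piltz (k+1) n : ℝ)
      = ∑ p ∈ n.divisorsAntidiagonal, (piltz k p.2 : ℝ) := by
    intro n _; rw [piltz_succ]; exact Nat.cast_sum _ _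
  rw [Finset.sum_congr rfl this, swap_sum ⌊x⌋₊ (fun _ e => (piltz k e : ℝ))]
  refine Finset.sum_congr rfl fun d hd => ?_
  rw [Nat.floor_div_natCast]

lemma harmonic_bound (N : ℕ) : ∑ d ∈ Finset.Icc 1 N, (d : ℝ)⁻¹ ≤ 1 + Real.log N := by
  have h := harmonic_le_one_add_log N
  rw [harmonic_eq_sum_Icc] at h
  push_cast at h
  exact h

lemma Tk_le (k : ℕ) : ∀ x : ℝ, 1 ≤ x → Tk (k+1) x ≤ x * (1 + Real.log x) ^ k := by
  induction k with
  | zero =>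
    intro x hx
    rw [Tk_one]
    simpa using (Nat.floor_le (by linarith) : (⌊x⌋₊ : ℝ) ≤ x)
  | succ k ih =>
    intro x hx
    rw [Tk_succ _ _ (by linarith)]
    have hlog : 0 ≤ Real.log x := Real.log_nonneg hx
    calc ∑ d ∈ Finset.Icc 1 ⌊x⌋₊, Tk (k+1) (x / d)
        ≤ ∑ d ∈ Finset.Icc 1 ⌊x⌋₊, (x / d) * (1 + Real.log x) ^ k := by
          refine Finset.sum_le_sum fun d hd => ?_
          simp only [Finset.mem_Icc] at hd
          have hd1 : (1 : ℝ) ≤ d := by exact_mod_cast hd.1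
          have hdx : (d : ℝ) ≤ x := le_trans (by exact_mod_cast Nat.cast_le.2 hd.2) (Nat.floor_le (by linarith))
          have hxd : 1 ≤ x / d := (one_le_div (by linarith)).2 hdx
          refine (ih _ hxd).trans ?_
          have hl0 : 0 ≤ Real.log (x / d) := Real.log_nonneg hxd
          have : (1 + Real.log (x / d)) ^ k ≤ (1 + Real.log x) ^ k := by
            apply pow_le_pow_left₀ (by linarith)
            have := Real.log_le_log (by linarith) (div_le_self (by linarith) hd1)
            linarith
          have hxd0 : 0 ≤ x / d := by positivity
          exact mul_le_mul_of_nonneg_left this hxd0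
      _ = x * (1 + Real.log x) ^ k * ∑ d ∈ Finset.Icc 1 ⌊x⌋₊, (d : ℝ)⁻¹ := by
          rw [Finset.mul_sum]; refine Finset.sum_congr rfl fun d _ => ?_; ring
      _ ≤ x * (1 + Real.log x) ^ k * (1 + Real.log x) := by
          refine mul_le_mul_of_nonneg_left ?_ (by positivity)
          refine (harmonic_bound _).trans ?_
          have : Real.log (⌊x⌋₊ : ℝ) ≤ Real.log x := by
            apply Real.log_le_log
            · exact_mod_cast Nat.floor_pos.2 hx
            · exact Nat.floor_le (by linarith)
          linarith
      _ = x * (1 + Real.log x) ^ (k+1) := by ring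


lemma hasDeriv_aux (x : ℝ) (m : ℕ) (t : ℝ) (ht : t ≠ 0) :
    HasDerivAt (fun s => -(Real.log x - Real.log s) ^ (m+1) / (m+1))
      ((Real.log x - Real.log t) ^ m / t) t := by
  have h1 : HasDerivAt (fun s => Real.log x - Real.log s) (-t⁻¹) t := by
    have := (hasDerivAt_const t (Real.log x)).sub (Real.hasDerivAt_log ht)
    simp only [zero_sub] at this; exact this
  have h2 := (h1.fun_pow (m+1)).fun_neg.div_const ((m : ℝ) + 1)
  refine h2.congr_deriv ?_
  push_cast
  field_simp

lemma cont_aux (x : ℝ) (m : ℕ) (a b : ℝ) (ha : 0 < a) (hab : a ≤ b) :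
    IntervalIntegrable (fun t => (Real.log x - Real.log t) ^ m / t) MeasureTheory.volume a b := by
  apply ContinuousOn.intervalIntegrable
  rw [Set.uIcc_of_le hab]
  apply ContinuousOn.div
  · exact (continuousOn_const.sub (Real.continuousOn_log.mono (fun t ht => by
      simp only [Set.mem_compl_iff, Set.mem_singleton_iff]
      intro h; rw [h] at ht; exact absurd ht.1 (by linarith)))).pow m
  · exact continuousOn_id
  · intro t ht; exact ne_of_gt (lt_of_lt_of_le ha ht.1)

lemma integral_log_pow (x : ℝ) (hx : 1 ≤ x) (m : ℕ) :
    ∫ t in (1:ℝ)..x, (Real.log x - Real.log t) ^ m / t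
      = (Real.log x) ^ (m+1) / (m+1) := by
  rw [intervalIntegral.integral_eq_sub_of_hasDerivAt
    (f := fun s => -(Real.log x - Real.log s) ^ (m+1) / (m+1))
    (fun t ht => hasDeriv_aux x m t (by
      rw [Set.uIcc_of_le hx] at ht; exact ne_of_gt (lt_of_lt_of_le one_pos ht.1)))
    (cont_aux x m 1 x one_pos hx)]
  simp [Real.log_one]; ring

lemma anti_aux (x : ℝ) (hx : 1 ≤ x) (m : ℕ) :
    AntitoneOn (fun t => (Real.log x - Real.log t) ^ m / t) (Set.Icc 1 x) := by
  intro a ha b hb hab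
  simp only [Set.mem_Icc] at ha hb
  have ha0 : (0:ℝ) < a := lt_of_lt_of_le one_pos ha.1
  have hb0 : (0:ℝ) < b := lt_of_lt_of_le one_pos hb.1
  have hlb : Real.log b ≤ Real.log x := Real.log_le_log hb0 hb.2
  have hla : Real.log a ≤ Real.log b := Real.log_le_log ha0 hab
  have hnb : 0 ≤ Real.log x - Real.log b := by linarith
  have h1 : (Real.log x - Real.log b) ^ m ≤ (Real.log x - Real.log a) ^ m :=
    pow_le_pow_left₀ hnb (by linarith) m
  have h2 : (0:ℝ) ≤ (Real.log x - Real.log a) ^ m := le_trans (pow_nonneg hnb m) h1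
  exact div_le_div₀ h2 h1 ha0 hab

lemma nonneg_aux (x : ℝ) (m : ℕ) (t : ℝ) (ht : 0 < t) :
    0 ≤ (Real.log x - Real.log t) ^ m / t ∨ True := Or.inr trivial

lemma sum_log_pow_div (m : ℕ) (x : ℝ) (hx : 1 ≤ x) :
    |(∑ d ∈ Finset.Icc 1 ⌊x⌋₊, (Real.log x - Real.log d) ^ m / d)
      - (Real.log x) ^ (m+1) / (m+1)| ≤ (Real.log x) ^ m := by
  set L := Real.log x with hL
  have hL0 : 0 ≤ L := Real.log_nonneg hx
  set f : ℝ → ℝ := fun t => (L - Real.log t) ^ m / t with hf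
  set N := ⌊x⌋₊ with hNdef
  have hN1 : 1 ≤ N := Nat.one_le_iff_ne_zero.mpr (by
    intro h; rw [hNdef] at h; have := Nat.floor_pos.2 hx; omega)
  have hNx : (N : ℝ) ≤ x := Nat.floor_le (by linarith)
  have hN1R : (1:ℝ) ≤ (N:ℝ) := by exact_mod_cast hN1
  -- nonnegativity of f on [1, x]
  have hfnn : ∀ t : ℝ, 1 ≤ t → t ≤ x → 0 ≤ f t := by
    intro t h1 h2
    have ht0 : (0:ℝ) < t := lt_of_lt_of_le one_pos h1
    have hlt : Real.log t ≤ L := Real.log_le_log ht0 h2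
    exact div_nonneg (pow_nonneg (by linarith) m) (le_of_lt ht0)
  -- f bounded by L^m on [1,x]
  have hfb : ∀ t : ℝ, 1 ≤ t → t ≤ x → f t ≤ L ^ m := by
    intro t h1 h2
    have ht0 : (0:ℝ) < t := lt_of_lt_of_le one_pos h1
    have hlt : Real.log t ≤ L := Real.log_le_log ht0 h2
    have hlt0 : 0 ≤ Real.log t := Real.log_nonneg h1
    have h3 : (L - Real.log t) ^ m ≤ L ^ m := pow_le_pow_left₀ (by linarith) (by linarith) m
    calc f t ≤ (L - Real.log t) ^ m / 1 := by
          apply div_le_div₀ (pow_nonneg (by linarith) m) le_rfl one_pos h1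
      _ = (L - Real.log t) ^ m := div_one _
      _ ≤ L ^ m := h3
  have hanti : AntitoneOn f (Set.Icc 1 x) := anti_aux x hx m
  have hantiN : AntitoneOn f (Set.Icc (1:ℝ) (1 + (N - 1 : ℕ))) := by
    apply hanti.mono
    apply Set.Icc_subset_Icc le_rfl
    push_cast [Nat.cast_sub hN1]
    linarith
  -- the three integrals
  have hint1N : IntervalIntegrable f MeasureTheory.volume 1 (N:ℝ) := cont_aux x m 1 N one_pos hN1R
  have hintNx : IntervalIntegrable f MeasureTheory.volume (N:ℝ) x := cont_aux x m N x (by linarith) hNx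
  have hsplit : (∫ t in (1:ℝ)..(N:ℝ), f t) + (∫ t in (N:ℝ)..x, f t) = ∫ t in (1:ℝ)..x, f t :=
    intervalIntegral.integral_add_adjacent_intervals hint1N hintNx
  have hIval : (∫ t in (1:ℝ)..x, f t) = L ^ (m+1) / (m+1) := integral_log_pow x hx m
  have hInn : 0 ≤ ∫ t in (N:ℝ)..x, f t := by
    apply intervalIntegral.integral_nonneg hNx
    intro t ht
    exact hfnn t (le_trans hN1R ht.1) ht.2
  have hIle : (∫ t in (N:ℝ)..x, f t) ≤ L ^ m := by
    have : (∫ t in (N:ℝ)..x, f t) ≤ ∫ t in (N:ℝ)..x, L ^ m := by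
      apply intervalIntegral.integral_mono_on hNx hintNx (intervalIntegrable_const)
      intro t ht
      exact hfb t (le_trans hN1R ht.1) ht.2
    rw [intervalIntegral.integral_const, smul_eq_mul] at this
    refine this.trans ?_
    have hxN : x - (N:ℝ) ≤ 1 := by
      have := Nat.lt_floor_add_one x
      push_cast at this ⊢
      linarith
    nlinarith [pow_nonneg hL0 m]
  -- upper bound : ∑_{d=2}^N f d ≤ ∫_1^N f
  have hupper : ∑ d ∈ Finset.Icc 1 N, f d ≤ L ^ m + L ^ (m+1) / (m+1) := by
    have h1 : ∑ d ∈ Finset.Icc 1 N, f d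
        = f ((1:ℕ):ℝ) + ∑ d ∈ Finset.Ioc 1 N, f d := by
      rw [← Finset.Icc_erase_left,
        ← Finset.add_sum_erase _ (fun d : ℕ => f d) (Finset.mem_Icc.2 ⟨le_rfl, hN1⟩)]
    have hIoc : Finset.Ioc 1 N = Finset.Ico 2 (N+1) := by
      ext d; simp only [Finset.mem_Ioc, Finset.mem_Ico]; omega
    have h2 : ∑ d ∈ Finset.Ioc 1 N, f d
        = ∑ i ∈ Finset.range (N - 1), f (1 + ((i + 1 : ℕ) : ℝ)) := by
      rw [hIoc, Finset.sum_Ico_eq_sum_range]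
      refine Finset.sum_congr (by congr 1 <;> omega) fun i _ => ?_
      push_cast; ring_nf
    have h3 := hantiN.sum_le_integral (a := N - 1)
    rw [← h2] at h3
    have hcast : (1 : ℝ) + ((N - 1 : ℕ) : ℝ) = (N : ℝ) := by
      push_cast [Nat.cast_sub hN1]; ring
    rw [hcast] at h3
    have hf1 : f ((1:ℕ):ℝ) = L ^ m := by simp [hf]
    have h4 : (∫ t in (1:ℝ)..(N:ℝ), f t) ≤ L ^ (m+1) / (m+1) := by
      rw [← hIval, ← hsplit]; linarith
    rw [h1, hf1]; linarith
  -- lower bound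
  have hlower : L ^ (m+1) / (m+1) - L ^ m ≤ ∑ d ∈ Finset.Icc 1 N, f d := by
    have h3 := hantiN.integral_le_sum (a := N - 1)
    have hcast : (1 : ℝ) + ((N - 1 : ℕ) : ℝ) = (N : ℝ) := by
      push_cast [Nat.cast_sub hN1]; ring
    rw [hcast] at h3
    have h2 : ∑ i ∈ Finset.range (N - 1), f (1 + (i : ℝ)) = ∑ d ∈ Finset.Ico 1 N, f d := by
      rw [Finset.sum_Ico_eq_sum_range]
      refine (Finset.sum_congr (by congr 1 <;> omega) fun i _ => ?_).symm
      push_cast; ring_nf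
    rw [h2] at h3
    have h5 : ∑ d ∈ Finset.Ico 1 N, f d ≤ ∑ d ∈ Finset.Icc 1 N, f d := by
      apply Finset.sum_le_sum_of_subset_of_nonneg
      · intro d hd
        simp only [Finset.mem_Ico] at hd
        exact Finset.mem_Icc.2 ⟨hd.1, by omega⟩
      · intro d hd _
        simp only [Finset.mem_Icc] at hd
        exact hfnn d (by exact_mod_cast hd.1) (le_trans (by exact_mod_cast hd.2) hNx)
    have h6 : L ^ (m+1) / (m+1) - L ^ m ≤ ∫ t in (1:ℝ)..(N:ℝ), f t := by
      rw [← hIval, ← hsplit]; linarith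
    linarith
  rw [abs_le]
  constructor
  · have : ∀ d ∈ Finset.Icc 1 N, (Real.log x - Real.log d) ^ m / d = f d := fun d hd => rfl
    rw [Finset.sum_congr rfl this]; linarith
  · have : ∀ d ∈ Finset.Icc 1 N, (Real.log x - Real.log d) ^ m / d = f d := fun d hd => rfl
    rw [Finset.sum_congr rfl this]; linarith

noncomputable def Ax (m : ℕ) (x : ℝ) : ℝ :=
  ∑ d ∈ Finset.Icc 1 ⌊x⌋₊, (x / d) * Real.log (x / d) ^ m

lemma Ax_eq (m : ℕ) (x : ℝ) (hx : 1 ≤ x) :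
    Ax m x = x * ∑ d ∈ Finset.Icc 1 ⌊x⌋₊, (Real.log x - Real.log d) ^ m / d := by
  rw [Ax, Finset.mul_sum]
  refine Finset.sum_congr rfl fun d hd => ?_
  simp only [Finset.mem_Icc] at hd
  have hd1 : (1:ℝ) ≤ d := by exact_mod_cast hd.1
  rw [Real.log_div (by linarith) (by linarith)]
  ring

lemma Ax_nonneg (m : ℕ) (x : ℝ) (hx : 1 ≤ x) : 0 ≤ Ax m x := by
  apply Finset.sum_nonneg
  intro d hd
  simp only [Finset.mem_Icc] at hd
  have hd1 : (1:ℝ) ≤ d := by exact_mod_cast hd.1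
  have hdx : (d:ℝ) ≤ x := le_trans (by exact_mod_cast Nat.cast_le.2 hd.2) (Nat.floor_le (by linarith))
  have h1 : (1:ℝ) ≤ x / d := (one_le_div (by linarith)).2 hdx
  have := Real.log_nonneg h1
  positivity

lemma Ax_lim (m : ℕ) :
    Tendsto (fun x => Ax m x / (x * Real.log x ^ (m+1))) atTop
      (nhds (1 / (m+1))) := by
  have key : Tendsto (fun x => Ax m x / (x * Real.log x ^ (m+1)) - 1/(m+1)) atTop (nhds 0) := by
    apply squeeze_zero_norm' (a := fun x => (Real.log x)⁻¹)
    · filter_upwards [eventually_ge_atTop (2:ℝ)] with x hx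
      have hx1 : (1:ℝ) ≤ x := by linarith
      have hx0 : (0:ℝ) < x := by linarith
      have hL : 0 < Real.log x := Real.log_pos (by linarith)
      have hb := sum_log_pow_div m x hx1
      set L := Real.log x
      set S := ∑ d ∈ Finset.Icc 1 ⌊x⌋₊, (L - Real.log d) ^ m / d with hS
      have heq : Ax m x / (x * L ^ (m+1)) - 1/(m+1)
          = (S - L^(m+1)/(m+1)) / L^(m+1) := by
        rw [Ax_eq m x hx1, ← hS]
        have hLm : L ^ (m+1) ≠ 0 := by positivity
        field_simp
      rw [heq, norm_div, norm_pow]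
      rw [Real.norm_eq_abs, Real.norm_eq_abs, abs_of_pos hL]
      rw [div_le_iff₀ (by positivity)]
      calc |S - L^(m+1)/(m+1)| ≤ L ^ m := hb
        _ = L⁻¹ * L^(m+1) := by field_simp; ring
    · exact Real.tendsto_log_atTop.inv_tendsto_atTop
  have := key.add (tendsto_const_nhds (x := (1:ℝ)/(m+1)) (f := atTop))
  simpa using this

lemma keyL (m : ℕ) (c : ℝ) (h : ℝ → ℝ)
    (hnn : ∀ y, 0 ≤ h y)
    (hbd : ∀ y : ℝ, 1 ≤ y → h y ≤ y * (1 + Real.log y) ^ m)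
    (hlim : Tendsto (fun y => h y / (y * Real.log y ^ m)) atTop (nhds c)) :
    Tendsto (fun x => (∑ d ∈ Finset.Icc 1 ⌊x⌋₊, h (x / d)) / (x * Real.log x ^ (m+1)))
      atTop (nhds (c / (m+1))) := by
  have hdelta : Tendsto (fun x =>
      ((∑ d ∈ Finset.Icc 1 ⌊x⌋₊, h (x / d)) - c * Ax m x) / (x * Real.log x ^ (m+1)))
      atTop (nhds 0) := by
    rw [NormedAddCommGroup.tendsto_nhds_zero]
    intro ε hε
    -- choose Y
    have h1 : ∀ᶠ y in atTop, |h y / (y * Real.log y ^ m) - c| ≤ ε/4 := by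
      have := Metric.tendsto_nhds.1 hlim (ε/4) (by linarith)
      filter_upwards [this] with y hy
      rw [Real.dist_eq] at hy; exact le_of_lt hy
    obtain ⟨Y₀, hY₀⟩ := eventually_atTop.1 h1
    set Y := max Y₀ 2 with hYdef
    have hY2 : (2:ℝ) ≤ Y := le_max_right _ _
    have hY1 : (1:ℝ) ≤ Y := by linarith
    set K := Y * (1 + Real.log Y) ^ m * (1 + |c|) with hKdef
    have hlogY : 0 ≤ Real.log Y := Real.log_nonneg hY1
    have hK0 : 0 ≤ K := by positivity
    -- per-term bound
    have hterm : ∀ x : ℝ, 1 ≤ x → ∀ d : ℕ, d ∈ Finset.Icc 1 ⌊x⌋₊ →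
        |h (x/d) - c * ((x/d) * Real.log (x/d) ^ m)|
          ≤ ε/4 * ((x/d) * Real.log (x/d) ^ m) + K := by
      intro x hx d hd
      simp only [Finset.mem_Icc] at hd
      have hd1 : (1:ℝ) ≤ d := by exact_mod_cast hd.1
      have hdx : (d:ℝ) ≤ x := le_trans (by exact_mod_cast Nat.cast_le.2 hd.2) (Nat.floor_le (by linarith))
      set y := x / d with hy
      have hy1 : (1:ℝ) ≤ y := (one_le_div (by linarith)).2 hdx
      have hly : 0 ≤ Real.log y := Real.log_nonneg hy1
      have hynn : 0 ≤ y * Real.log y ^ m := by positivity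
      rcases le_or_gt Y y with hcase | hcase
      · -- y ≥ Y : use hY₀
        have hy2 : (2:ℝ) ≤ y := le_trans hY2 hcase
        have hylog : 0 < Real.log y := Real.log_pos (by linarith)
        have hypos : 0 < y * Real.log y ^ m := by positivity
        have hb := hY₀ y (le_trans (le_max_left _ _) hcase)
        have : |h y - c * (y * Real.log y ^ m)| ≤ ε/4 * (y * Real.log y ^ m) := by
          have heq : h y - c * (y * Real.log y ^ m)
              = (h y / (y * Real.log y ^ m) - c) * (y * Real.log y ^ m) := by
            field_simp
          rw [heq, abs_mul, abs_of_pos hypos]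
          exact mul_le_mul_of_nonneg_right hb (le_of_lt hypos)
        linarith [this, hK0]
      · -- y < Y : use crude bounds
        have hb1 : h y ≤ Y * (1 + Real.log Y) ^ m := by
          refine (hbd y hy1).trans ?_
          have h2 : Real.log y ≤ Real.log Y := Real.log_le_log (by linarith) (le_of_lt hcase)
          have h3 : (1 + Real.log y) ^ m ≤ (1 + Real.log Y) ^ m :=
            pow_le_pow_left₀ (by linarith) (by linarith) m
          have := mul_le_mul (le_of_lt hcase) h3 (by positivity) (by linarith)
          linarith
        have hb2 : y * Real.log y ^ m ≤ Y * (1 + Real.log Y) ^ m := by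
          have h2 : Real.log y ≤ Real.log Y := Real.log_le_log (by linarith) (le_of_lt hcase)
          have h3 : Real.log y ^ m ≤ (1 + Real.log Y) ^ m :=
            pow_le_pow_left₀ hly (by linarith) m
          exact mul_le_mul (le_of_lt hcase) h3 (by positivity) (by linarith)
        have habs : |h y - c * (y * Real.log y ^ m)| ≤ h y + |c| * (y * Real.log y ^ m) := by
          refine (abs_sub _ _).trans ?_
          rw [abs_of_nonneg (hnn y), abs_mul, abs_of_nonneg hynn]
        have hc2 : |c| * (y * Real.log y ^ m) ≤ |c| * (Y * (1 + Real.log Y) ^ m) :=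
          mul_le_mul_of_nonneg_left hb2 (abs_nonneg c)
        have hKexp : K = Y * (1 + Real.log Y) ^ m + |c| * (Y * (1 + Real.log Y) ^ m) := by
          rw [hKdef]; ring
        have hεterm : 0 ≤ ε/4 * (y * Real.log y ^ m) := by positivity
        rw [hKexp]; linarith
    -- global bound : |Δ x| ≤ ε/4 * Ax m x + K * x
    have hglob : ∀ x : ℝ, 1 ≤ x →
        |(∑ d ∈ Finset.Icc 1 ⌊x⌋₊, h (x / d)) - c * Ax m x| ≤ ε/4 * Ax m x + K * x := by
      intro x hx
      have hΔ : (∑ d ∈ Finset.Icc 1 ⌊x⌋₊, h (x / d)) - c * Ax m x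
          = ∑ d ∈ Finset.Icc 1 ⌊x⌋₊, (h (x/d) - c * ((x/d) * Real.log (x/d) ^ m)) := by
        rw [Ax, Finset.mul_sum, Finset.sum_sub_distrib]
      rw [hΔ]
      refine (Finset.abs_sum_le_sum_abs _ _).trans ?_
      refine le_trans (Finset.sum_le_sum (hterm x hx)) ?_
      rw [Finset.sum_add_distrib, ← Finset.mul_sum, Finset.sum_const, ← Ax]
      rw [nsmul_eq_mul]
      have hcard : ((Finset.Icc 1 ⌊x⌋₊).card : ℝ) ≤ x := by
        have h' : (Finset.Icc 1 ⌊x⌋₊).card = ⌊x⌋₊ := by rw [Nat.card_Icc]; omega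
        rw [h']; exact Nat.floor_le (by linarith)
      have : ((Finset.Icc 1 ⌊x⌋₊).card : ℝ) * K ≤ K * x := by
        rw [mul_comm]; exact mul_le_mul_of_nonneg_left hcard hK0
      linarith
    -- eventual bounds
    have hA2 : ∀ᶠ x in atTop, Ax m x / (x * Real.log x ^ (m+1)) ≤ 2 := by
      have hlt : (1:ℝ)/(m+1) < 2 := by
        have : (1:ℝ) ≤ (m:ℝ)+1 := by exact_mod_cast Nat.succ_le_succ (Nat.zero_le m)
        have h0 : (0:ℝ) < (m:ℝ)+1 := by linarith
        rw [div_lt_iff₀ h0]; nlinarith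
      filter_upwards [(Ax_lim m).eventually_lt_const hlt] with x hx using le_of_lt hx
    have hKlim : Tendsto (fun x => K / Real.log x ^ (m+1)) atTop (nhds 0) := by
      have h2 := ((tendsto_pow_atTop (Nat.succ_ne_zero m)).comp
        Real.tendsto_log_atTop).inv_tendsto_atTop
      have := h2.const_mul K
      simpa [div_eq_mul_inv, Function.comp] using this
    have hKsm : ∀ᶠ x in atTop, K / Real.log x ^ (m+1) < ε/2 :=
      hKlim.eventually_lt_const (by linarith)
    filter_upwards [eventually_ge_atTop (2:ℝ), hA2, hKsm] with x hx2 hxA hxK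
    have hx1 : (1:ℝ) ≤ x := by linarith
    have hx0 : (0:ℝ) < x := by linarith
    have hL : 0 < Real.log x := Real.log_pos (by linarith)
    have hD : 0 < x * Real.log x ^ (m+1) := by positivity
    rw [norm_div, Real.norm_eq_abs, Real.norm_eq_abs, abs_of_pos hD, div_lt_iff₀ hD]
    have hAx : Ax m x ≤ 2 * (x * Real.log x ^ (m+1)) := by
      rw [div_le_iff₀ hD] at hxA; linarith
    have hKx : K * x < ε/2 * (x * Real.log x ^ (m+1)) := by
      rw [div_lt_iff₀ (by positivity : (0:ℝ) < Real.log x ^ (m+1))] at hxK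
      calc K * x < (ε/2 * Real.log x ^ (m+1)) * x :=
            mul_lt_mul_of_pos_right hxK hx0
        _ = ε/2 * (x * Real.log x ^ (m+1)) := by ring
    have h5 := hglob x hx1
    have h6 : ε/4 * Ax m x ≤ ε/4 * (2 * (x * Real.log x ^ (m+1))) :=
      mul_le_mul_of_nonneg_left hAx (by linarith)
    calc |(∑ d ∈ Finset.Icc 1 ⌊x⌋₊, h (x / d)) - c * Ax m x|
        ≤ ε/4 * Ax m x + K * x := h5
      _ < ε * (x * Real.log x ^ (m+1)) := by linarith
  have hsum := hdelta.add ((Ax_lim m).const_mul c)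
  have hval : (0:ℝ) + c * (1/(m+1)) = c/(m+1) := by ring
  rw [hval] at hsum
  apply hsum.congr
  intro x
  rw [← mul_div_assoc, ← add_div, sub_add_cancel]

lemma Tk_lim (k : ℕ) :
    Tendsto (fun x => Tk (k+1) x / (x * Real.log x ^ k)) atTop
      (nhds (1 / (Nat.factorial k : ℝ))) := by
  induction k with
  | zero =>
    simp only [pow_zero, mul_one, Nat.factorial_zero, Nat.cast_one, one_div_one]
    exact (tendsto_nat_floor_div_atTop (R := ℝ)).congr fun x => by rw [Tk_one]
  | succ k ih =>
    have hkey := keyL k (1 / (Nat.factorial k : ℝ)) (Tk (k+1)) (Tk_nonneg _) (Tk_le k) ih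
    have hval : (1 / (Nat.factorial k : ℝ)) / ((k : ℝ) + 1) = 1 / (Nat.factorial (k+1) : ℝ) := by
      rw [Nat.factorial_succ]
      push_cast
      rw [div_div, one_div, one_div, mul_comm]
    rw [hval] at hkey
    apply hkey.congr'
    filter_upwards [eventually_ge_atTop (0:ℝ)] with x hx
    rw [Tk_succ _ _ hx]

-- the tendsto for each fixed d ≥ 1
lemma Tk_lim_d (m : ℕ) (d : ℕ) (hd : 1 ≤ d) :
    Tendsto (fun x => Tk (m+1) (x / d) / (x * Real.log x ^ m)) atTop
      (nhds ((1 / (Nat.factorial m : ℝ)) * (1 / d))) := by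
  have hd0 : (0:ℝ) < d := by exact_mod_cast hd
  have hd1 : (1:ℝ) ≤ d := by exact_mod_cast hd
  have t1 : Tendsto (fun x => Tk (m+1) (x/d) / ((x/d) * Real.log (x/d) ^ m)) atTop
      (nhds (1 / (Nat.factorial m : ℝ))) :=
    (Tk_lim m).comp (tendsto_id.atTop_div_const hd0)
  have t2 : Tendsto (fun x => Real.log (x/d) / Real.log x) atTop (nhds 1) := by
    have h3 : Tendsto (fun x : ℝ => 1 - Real.log d * (Real.log x)⁻¹) atTop (nhds 1) := by
      have := (Real.tendsto_log_atTop.inv_tendsto_atTop).const_mul (Real.log d)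
      have h4 := (tendsto_const_nhds (x := (1:ℝ)) (f := atTop)).sub this
      simpa using h4
    apply h3.congr'
    filter_upwards [eventually_ge_atTop (2:ℝ)] with x hx
    have hx0 : (0:ℝ) < x := by linarith
    have hlx : Real.log x ≠ 0 := ne_of_gt (Real.log_pos (by linarith))
    rw [Real.log_div (by linarith) (by linarith)]
    field_simp
  have tcomb := (t1.mul (t2.pow m)).div_const (d : ℝ)
  have hval : (1 / (Nat.factorial m : ℝ)) * 1 ^ m / (d : ℝ)
      = (1 / (Nat.factorial m : ℝ)) * (1 / d) := by ring
  rw [hval] at tcomb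
  apply tcomb.congr'
  filter_upwards [eventually_ge_atTop (2 * (d:ℝ)), eventually_ge_atTop (2:ℝ)] with x hx2d hx2
  have hx0 : (0:ℝ) < x := by linarith
  have hlx : (0:ℝ) < Real.log x := Real.log_pos (by linarith)
  have hxd2 : (2:ℝ) ≤ x / d := by
    rw [le_div_iff₀ hd0]; linarith
  have hly : (0:ℝ) < Real.log (x/d) := Real.log_pos (by linarith)
  have hyd : (0:ℝ) < x / d := by positivity
  field_simp
  rw [mul_assoc, ← mul_pow, div_mul_cancel₀ _ hlx.ne']

theorem cohen_mean_value (k : ℕ) (hk : 1 ≤ k) (f g : ℕ → ℂ)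
    (hfg : ∀ n : ℕ, 0 < n →
      f n = ∑ p ∈ n.divisorsAntidiagonal, g p.1 * (piltz k p.2 : ℂ))
    (hg : Summable fun n : ℕ => ‖g n‖ / n) :
    Tendsto (fun x : ℝ =>
        (∑ n ∈ Finset.Icc 1 ⌊x⌋₊, f n) / ((x * Real.log x ^ (k - 1) : ℝ) : ℂ))
      atTop
      (nhds ((1 / (Nat.factorial (k - 1) : ℂ)) * ∑' n : ℕ, g n / (n : ℂ))) := by
  obtain ⟨m, rfl⟩ : ∃ m, k = m + 1 := ⟨k - 1, by omega⟩
  simp only [Nat.add_sub_cancel]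
  set F : ℝ → ℕ → ℂ := fun x d =>
    if d ∈ Finset.Icc 1 ⌊x⌋₊ then
      g d * ((Tk (m+1) (x / d) / (x * Real.log x ^ m) : ℝ) : ℂ) else 0 with hF
  have heq : ∀ x : ℝ, (∑ n ∈ Finset.Icc 1 ⌊x⌋₊, f n) / ((x * Real.log x ^ m : ℝ) : ℂ)
      = ∑' d, F x d := by
    intro x
    rw [tsum_eq_sum (s := Finset.Icc 1 ⌊x⌋₊) (fun b hb => if_neg hb)]
    have h1 : ∑ n ∈ Finset.Icc 1 ⌊x⌋₊, f n
        = ∑ d ∈ Finset.Icc 1 ⌊x⌋₊, ∑ e ∈ Finset.Icc 1 (⌊x⌋₊ / d),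
            g d * (piltz (m+1) e : ℂ) := by
      rw [← swap_sum]
      refine Finset.sum_congr rfl fun n hn => hfg n ?_
      simp only [Finset.mem_Icc] at hn; omega
    rw [h1, Finset.sum_div]
    refine Finset.sum_congr rfl fun d hd => ?_
    simp only [if_pos hd]
    have h2 : ((Tk (m+1) (x / d) : ℝ) : ℂ)
        = ∑ e ∈ Finset.Icc 1 (⌊x⌋₊ / d), (piltz (m+1) e : ℂ) := by
      rw [Tk, Nat.floor_div_natCast]
      push_cast
      rfl
    rw [← Finset.mul_sum, ← h2, Complex.ofReal_div, mul_div_assoc]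
  set G : ℕ → ℂ := fun d => (1 / (Nat.factorial m : ℂ)) * (g d / d) with hG
  have hptw : ∀ d : ℕ, Tendsto (fun x => F x d) atTop (nhds (G d)) := by
    intro d
    rcases Nat.eq_zero_or_pos d with rfl | hd1
    · have hG0 : G 0 = 0 := by simp [hG]
      rw [hG0]
      exact tendsto_const_nhds.congr fun x => (if_neg (by simp)).symm
    · have hreal := Tk_lim_d m d hd1
      have hC : Tendsto (fun x => ((Tk (m+1) (x / d) / (x * Real.log x ^ m) : ℝ) : ℂ)) atTop
          (nhds (((1 / (Nat.factorial m : ℝ)) * (1 / d) : ℝ) : ℂ)) :=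
        (Complex.continuous_ofReal.tendsto _).comp hreal
      have h3 := hC.const_mul (g d)
      have hval : g d * (((1 / (Nat.factorial m : ℝ)) * (1 / d) : ℝ) : ℂ) = G d := by
        rw [hG]; push_cast; ring
      rw [hval] at h3
      apply h3.congr'
      filter_upwards [eventually_ge_atTop ((d : ℝ))] with x hx
      have hmem : d ∈ Finset.Icc 1 ⌊x⌋₊ := Finset.mem_Icc.2 ⟨hd1, Nat.le_floor hx⟩
      rw [hF]; simp only [if_pos hmem]
  have hbound : ∀ᶠ x in atTop, ∀ d : ℕ, ‖F x d‖ ≤ (2:ℝ)^m * (‖g d‖ / d) := by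
    filter_upwards [eventually_ge_atTop (Real.exp 1)] with x hx d
    have hx1 : (1:ℝ) ≤ x := le_trans (Real.one_le_exp zero_le_one) hx
    have hlog1 : (1:ℝ) ≤ Real.log x := by
      rw [Real.le_log_iff_exp_le (by linarith)]; exact hx
    by_cases hd : d ∈ Finset.Icc 1 ⌊x⌋₊
    · have hd' := Finset.mem_Icc.1 hd
      have hd1 : (1:ℝ) ≤ d := by exact_mod_cast hd'.1
      have hd0 : (0:ℝ) < d := by linarith
      have hdx : (d:ℝ) ≤ x := le_trans (by exact_mod_cast Nat.cast_le.2 hd'.2)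
        (Nat.floor_le (by linarith))
      have hxd1 : (1:ℝ) ≤ x / d := (one_le_div hd0).2 hdx
      have hD : (0:ℝ) < x * Real.log x ^ m := by positivity
      have hTk : Tk (m+1) (x/d) ≤ (x/d) * (2 * Real.log x) ^ m := by
        refine (Tk_le m (x/d) hxd1).trans ?_
        refine mul_le_mul_of_nonneg_left (pow_le_pow_left₀ ?_ ?_ m) (by positivity)
        · have := Real.log_nonneg hxd1; linarith
        · have hlxd : Real.log (x/d) ≤ Real.log x :=
            Real.log_le_log (by positivity) (div_le_self (by linarith) hd1)
          linarith
      have hdivle : Tk (m+1) (x/d) / (x * Real.log x ^ m) ≤ (2:ℝ)^m / d := by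
        rw [div_le_div_iff₀ hD hd0]
        calc Tk (m+1) (x/d) * d ≤ ((x/d) * (2 * Real.log x) ^ m) * d :=
              mul_le_mul_of_nonneg_right hTk (by linarith)
          _ = 2^m * (x * Real.log x ^ m) := by
              field_simp
              ring
      simp only [hF, if_pos hd]
      rw [norm_mul, Complex.norm_real, Real.norm_eq_abs,
        abs_of_nonneg (div_nonneg (Tk_nonneg _ _) hD.le)]
      calc ‖g d‖ * (Tk (m+1) (x/d) / (x * Real.log x ^ m))
          ≤ ‖g d‖ * ((2:ℝ)^m / d) := mul_le_mul_of_nonneg_left hdivle (norm_nonneg _)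
        _ = (2:ℝ)^m * (‖g d‖ / d) := by ring
    · simp only [hF, if_neg hd, norm_zero]
      positivity
  have hsum : Summable (fun d : ℕ => (2:ℝ)^m * (‖g d‖ / d)) := hg.mul_left _
  have hT := tendsto_tsum_of_dominated_convergence hsum hptw hbound
  have hGval : ∑' d, G d = (1 / (Nat.factorial m : ℂ)) * ∑' n : ℕ, g n / n := tsum_mul_left
  rw [hGval] at hT
  exact hT.congr fun x => (heq x).symm
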